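/- If 0 < q < q', then P_I(q) ≤ P_I(q') pointwise: for every Q ∈ P_I(q) and every Q' ∈ P_I(q'), one has Q ≤ Q'. -/

import Mathlib

open Matrix ComplexOrder

noncomputable section

namespace FRIR

variable {d N : ℕ}

/-- A POVM with `N+1` outcomes on a `d`-dimensional system: `M 0` is the
inconclusive outcome, `M i.succ` is the conclusive outcome for state `i`. -/
def IsPOVM (M : Fin (N + 1) → Matrix (Fin d) (Fin d) ℂ) : Prop :=
  (∀ i, (M i).PosSemidef) ∧ ∑ i, M i = 1

/-- `ρ₀ = ∑ i q_i ρ_i`. -/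
def rho0 (q : Fin N → ℝ) (ρ : Fin N → Matrix (Fin d) (Fin d) ℂ) :
    Matrix (Fin d) (Fin d) ℂ :=
  ∑ i, (q i : ℂ) • ρ i

/-- The probability of the inconclusive result, `P_I = tr(ρ₀ M₀)`. -/
def PIof (q : Fin N → ℝ) (ρ : Fin N → Matrix (Fin d) (Fin d) ℂ)
    (M : Fin (N + 1) → Matrix (Fin d) (Fin d) ℂ) : ℝ :=
  (Matrix.trace (rho0 q ρ * M 0)).re

/-- `P_cor = ∑ i q_i tr(ρ_i M_i)`. -/
def Pcor (q : Fin N → ℝ) (ρ : Fin N → Matrix (Fin d) (Fin d) ℂ)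
    (M : Fin (N + 1) → Matrix (Fin d) (Fin d) ℂ) : ℝ :=
  ∑ i : Fin N, q i * (Matrix.trace (ρ i * M i.succ)).re

/-- `P̄_cor = q·tr(ρ₀M₀) + ∑ i q_i tr(ρ_i M_i)`. -/
def PbarCor (qv : ℝ) (q : Fin N → ℝ) (ρ : Fin N → Matrix (Fin d) (Fin d) ℂ)
    (M : Fin (N + 1) → Matrix (Fin d) (Fin d) ℂ) : ℝ :=
  qv * PIof q ρ M + Pcor q ρ M

/-- `P̄_cor^opt(q)`: the maximal value of `P̄_cor` over all POVMs. -/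
def PbarOpt (qv : ℝ) (q : Fin N → ℝ) (ρ : Fin N → Matrix (Fin d) (Fin d) ℂ) : ℝ :=
  sSup {x : ℝ | ∃ M, IsPOVM M ∧ PbarCor qv q ρ M = x}

/-- `P_cor^opt(Q)`: the maximal value of `P_cor` over POVMs with `P_I = Q`. -/
def PcorOpt (Q : ℝ) (q : Fin N → ℝ) (ρ : Fin N → Matrix (Fin d) (Fin d) ℂ) : ℝ :=
  sSup {x : ℝ | ∃ M, IsPOVM M ∧ PIof q ρ M = Q ∧ Pcor q ρ M = x}

/-- `P_I(q) = { tr(ρ₀M₀) : POVMs attaining P̄_cor^opt(q) }`. -/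
def PIset (qv : ℝ) (q : Fin N → ℝ) (ρ : Fin N → Matrix (Fin d) (Fin d) ℂ) : Set ℝ :=
  {Q : ℝ | ∃ M, IsPOVM M ∧ PbarCor qv q ρ M = PbarOpt qv q ρ ∧ PIof q ρ M = Q}


private lemma trace_re_nonneg' {d : ℕ} {A : Matrix (Fin d) (Fin d) ℂ} (hA : A.PosSemidef) :
    0 ≤ (Matrix.trace A).re := by
  rw [Matrix.trace]
  have h : ∀ i, 0 ≤ (A.diag i).re := by
    intro i
    have := hA.re_dotProduct_nonneg (Pi.single i 1)
    simpa [dotProduct, Matrix.mulVec, Pi.single_apply, Finset.sum_ite_eq,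
      Matrix.diag] using this
  calc (0:ℝ) = ∑ i, (0:ℝ) := by simp
  _ ≤ ((∑ i, A.diag i).re) := by
      rw [Complex.re_sum]
      exact Finset.sum_le_sum fun i _ => h i

private lemma trace_mul_re_nonneg' {d : ℕ} {A B : Matrix (Fin d) (Fin d) ℂ}
    (hA : A.PosSemidef) (hB : B.PosSemidef) : 0 ≤ (Matrix.trace (A * B)).re := by
  obtain ⟨C, hC⟩ : ∃ C : Matrix (Fin d) (Fin d) ℂ, A = Cᴴ * C := by
    open scoped MatrixOrder Matrix.Norms.L2Operator in
    obtain ⟨B, rfl⟩ := CStarAlgebra.nonneg_iff_eq_star_mul_self.mp hA.nonneg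
    exact ⟨B, rfl⟩
  have h1 : Matrix.trace (A * B) = Matrix.trace (C * B * Cᴴ) := by
    rw [hC, mul_assoc, Matrix.trace_mul_comm]
  rw [h1]
  exact trace_re_nonneg' (hB.mul_mul_conjTranspose_same C)

private lemma povm_trace_le' {d N : ℕ} {M : Fin (N + 1) → Matrix (Fin d) (Fin d) ℂ}
    (hM : IsPOVM M) {A : Matrix (Fin d) (Fin d) ℂ} (hA : A.PosSemidef)
    (k : Fin (N + 1)) :
    (Matrix.trace (A * M k)).re ≤ (Matrix.trace A).re := by
  have h : Matrix.trace A = ∑ i, Matrix.trace (A * M i) := by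
    rw [← Matrix.trace_sum, ← Finset.mul_sum, hM.2, mul_one]
  rw [h, Complex.re_sum]
  exact Finset.single_le_sum (fun i _ => trace_mul_re_nonneg' hA (hM.1 i))
    (Finset.mem_univ k)

private lemma pbar_le' {d N : ℕ} {q : Fin N → ℝ} {ρ : Fin N → Matrix (Fin d) (Fin d) ℂ}
    (hq : ∀ i, 0 ≤ q i) (hqsum : ∑ i, q i = 1)
    (hρ : ∀ i, (ρ i).PosSemidef) (htri : ∀ i, ((ρ i).trace).re = 1)
    (h0psd : (rho0 q ρ).PosSemidef) (h0tr : ((rho0 q ρ).trace).re = 1)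
    {M : Fin (N + 1) → Matrix (Fin d) (Fin d) ℂ} (hM : IsPOVM M)
    {qvv : ℝ} (hqvv : 0 ≤ qvv) :
    PbarCor qvv q ρ M ≤ qvv + 1 := by
  have hPI : PIof q ρ M ≤ 1 := by
    have := povm_trace_le' hM h0psd 0
    rwa [h0tr] at this
  have hPc : Pcor q ρ M ≤ 1 := by
    calc Pcor q ρ M ≤ ∑ i : Fin N, q i * 1 := by
          refine Finset.sum_le_sum fun i _ => ?_
          have := povm_trace_le' hM (hρ i) i.succ
          rw [htri i] at this
          exact mul_le_mul_of_nonneg_left this (hq i)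
      _ = 1 := by simp [hqsum]
  have hm : qvv * PIof q ρ M ≤ qvv * 1 := mul_le_mul_of_nonneg_left hPI hqvv
  unfold PbarCor
  linarith

/-- If `0 < q < q'`, then `P_I(q) ≤ P_I(q')` pointwise. -/
theorem stmt2 {d N : ℕ} (hd : 0 < d) (hN : 0 < N)
    (q : Fin N → ℝ) (ρ : Fin N → Matrix (Fin d) (Fin d) ℂ)
    (hq : ∀ i, 0 < q i) (hqsum : ∑ i, q i = 1)
    (hρ : ∀ i, (ρ i).PosSemidef) (htr : ∀ i, (ρ i).trace = 1)
    (hρ0 : (rho0 q ρ).PosDef)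
    (qv qv' : ℝ) (hqv : 0 < qv) (hlt : qv < qv') :
    ∀ Q ∈ PIset qv q ρ, ∀ Q' ∈ PIset qv' q ρ, Q ≤ Q' := by
  have hq0 : ∀ i, 0 ≤ q i := fun i => (hq i).le
  have hρpsd : ∀ i, (ρ i).PosSemidef := hρ
  have htri : ∀ i, ((ρ i).trace).re = 1 := fun i => by rw [htr i]; simp
  have h0psd : (rho0 q ρ).PosSemidef := hρ0.posSemidef
  have h0tr : ((rho0 q ρ).trace).re = 1 := by
    have h : (rho0 q ρ).trace = ∑ i, (q i : ℂ) * (ρ i).trace := by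
      simp [rho0, Matrix.trace_sum, Matrix.trace_smul, smul_eq_mul]
    rw [h]
    simp only [htr, mul_one]
    rw [Complex.re_sum]
    simpa using hqsum
  have bdd : ∀ qvv : ℝ, 0 ≤ qvv →
      BddAbove {x : ℝ | ∃ M, IsPOVM M ∧ PbarCor qvv q ρ M = x} := by
    intro qvv hqvv
    refine ⟨qvv + 1, ?_⟩
    rintro x ⟨M, hM, rfl⟩
    exact pbar_le' hq0 hqsum hρpsd htri h0psd h0tr hM hqvv
  intro Q hQ Q' hQ'
  obtain ⟨M, hM, hMopt, hMQ⟩ := hQ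
  obtain ⟨M', hM', hM'opt, hM'Q⟩ := hQ'
  have h1 : PbarCor qv q ρ M' ≤ PbarCor qv q ρ M := by
    rw [hMopt]
    exact le_csSup (bdd qv hqv.le) ⟨M', hM', rfl⟩
  have h2 : PbarCor qv' q ρ M ≤ PbarCor qv' q ρ M' := by
    rw [hM'opt]
    exact le_csSup (bdd qv' (hqv.trans hlt).le) ⟨M, hM, rfl⟩
  unfold PbarCor at h1 h2
  rw [hMQ, hM'Q] at h1 h2
  nlinarith [sub_pos.mpr hlt]

end FRIR
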